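/- Let Π_1, …, Π_N be rank-p orthogonal projectors in the real n×n matrices with 1 ≤ p < n, and let C_e = (1/N) Σ_{k=1}^N Π_k. If the function Π ↦ trace(Π C_e) is constant over all rank-p orthogonal projectors Π (i.e., the configuration is balanced on Grass(p,n)), then C_e = (p/n) I_n. -/

import Mathlib

open Matrix

/-- Trace of an idempotent real matrix equals its rank. -/
lemma idem_trace_eq_rank {n : ℕ} (A : Matrix (Fin n) (Fin n) ℝ) (h : A * A = A) :
    A.trace = (A.rank : ℝ) := by
  classical
  set f := A.mulVecLin with hf
  have hidem : f ∘ₗ f = f := by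
    rw [hf, ← Matrix.mulVecLin_mul, h]
  obtain ⟨q, hq⟩ := (LinearMap.isProj_iff_isIdempotentElem f).mpr hidem
  have hrange : q = LinearMap.range f := by
    apply le_antisymm
    · intro x hx
      exact ⟨x, hq.map_id x hx⟩
    · rintro _ ⟨y, rfl⟩
      exact hq.map_mem y
  have htr : LinearMap.trace ℝ (Fin n → ℝ) f = (Module.finrank ℝ q : ℝ) := hq.trace
  have hmt : LinearMap.trace ℝ (Fin n → ℝ) f = A.trace := by
    rw [LinearMap.trace_eq_matrix_trace ℝ (Pi.basisFun ℝ (Fin n)) f,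
      LinearMap.toMatrix_eq_toMatrix', hf, ← Matrix.toLin'_apply', LinearMap.toMatrix'_toLin']
  rw [← hmt, htr, Matrix.rank, ← hrange]

/-- the vector supported on `{i,j}` with values `a`, `b`. -/
def uvec {n : ℕ} (i j : Fin n) (a b : ℝ) : Fin n → ℝ :=
  fun x => if x = i then a else if x = j then b else 0

lemma uvec_dot {n : ℕ} {i j : Fin n} (hij : i ≠ j) (a b : ℝ) (v : Fin n → ℝ) :
    uvec i j a b ⬝ᵥ v = a * v i + b * v j := by
  classical
  rw [dotProduct]
  rw [← Finset.sum_subset (Finset.subset_univ ({i, j} : Finset (Fin n)))]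
  · rw [Finset.sum_pair hij]
    simp [uvec, hij.symm]
  · intro x _ hx
    simp only [Finset.mem_insert, Finset.mem_singleton, not_or] at hx
    simp [uvec, hx.1, hx.2]

lemma trace_vmv {n : ℕ} (u v : Fin n → ℝ) (A : Matrix (Fin n) (Fin n) ℝ) :
    (vecMulVec u v * A).trace = v ⬝ᵥ (A *ᵥ u) := by
  simp only [Matrix.trace, Matrix.diag, Matrix.mul_apply, vecMulVec_apply, dotProduct,
    Matrix.mulVec, Finset.mul_sum]
  rw [Finset.sum_comm]
  exact Finset.sum_congr rfl fun l _ => Finset.sum_congr rfl fun k _ => by ring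

section proj

variable {n : ℕ} {i j : Fin n} (hij : i ≠ j) {a b : ℝ} (hab : a ^ 2 + b ^ 2 = 1)
  {S : Finset (Fin n)} (hiS : i ∉ S) (hjS : j ∉ S)

/-- diagonal 0/1 matrix of a finset. -/
noncomputable def dmat {n : ℕ} (S : Finset (Fin n)) : Matrix (Fin n) (Fin n) ℝ :=
  Matrix.diagonal (fun x => if x ∈ S then (1 : ℝ) else 0)

noncomputable def pimat {n : ℕ} (i j : Fin n) (a b : ℝ) (S : Finset (Fin n)) :
    Matrix (Fin n) (Fin n) ℝ :=
  vecMulVec (uvec i j a b) (uvec i j a b) + dmat S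

include hij hab hiS hjS in
lemma pimat_proj :
    (pimat i j a b S)ᵀ = pimat i j a b S ∧
      pimat i j a b S * pimat i j a b S = pimat i j a b S ∧
      (pimat i j a b S).trace = 1 + (S.card : ℝ) := by
  classical
  have huu : uvec i j a b ⬝ᵥ uvec i j a b = 1 := by
    rw [uvec_dot hij]
    simp [uvec, hij.symm]
    nlinarith [hab]
  set u := uvec i j a b with hu
  have hQD : vecMulVec u u * dmat S = 0 := by
    ext k l
    rw [dmat, Matrix.mul_diagonal]
    by_cases hl : l ∈ S
    · have h1 : l ≠ i := fun h => hiS (h ▸ hl)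
      have h2 : l ≠ j := fun h => hjS (h ▸ hl)
      simp [vecMulVec_apply, hu, uvec, h1, h2]
    · simp [hl]
  have hDQ : dmat S * vecMulVec u u = 0 := by
    ext k l
    rw [dmat, Matrix.diagonal_mul]
    by_cases hk : k ∈ S
    · have h1 : k ≠ i := fun h => hiS (h ▸ hk)
      have h2 : k ≠ j := fun h => hjS (h ▸ hk)
      simp [vecMulVec_apply, hu, uvec, h1, h2]
    · simp [hk]
  have hQQ : vecMulVec u u * vecMulVec u u = vecMulVec u u := by
    ext k l
    rw [Matrix.mul_apply]
    have : ∀ m, (vecMulVec u u) k m * (vecMulVec u u) m l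
        = (u k * u l) * (u m * u m) := by
      intro m; simp [vecMulVec_apply]; ring
    simp_rw [this]
    rw [← Finset.mul_sum]
    have : ∑ m, u m * u m = 1 := huu
    rw [this, mul_one, vecMulVec_apply]
  have hDD : dmat S * dmat S = dmat S := by
    rw [dmat, Matrix.diagonal_mul_diagonal]
    refine congrArg Matrix.diagonal ?_
    funext x
    by_cases hx : x ∈ S <;> simp [hx]
  refine ⟨?_, ?_, ?_⟩
  · rw [pimat, Matrix.transpose_add, dmat, Matrix.diagonal_transpose]
    congr 1
    ext k l
    simp [Matrix.transpose_apply, vecMulVec_apply, mul_comm]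
  · rw [pimat, add_mul, mul_add, mul_add, hQQ, hQD, hDQ, hDD]
    simp [hu]
  · rw [pimat, Matrix.trace_add]
    have h1 : (vecMulVec u u).trace = 1 := by
      rw [Matrix.trace]
      simp only [Matrix.diag, vecMulVec_apply]
      exact huu
    have h2 : (dmat S).trace = (S.card : ℝ) := by
      rw [dmat, Matrix.trace_diagonal]
      rw [Finset.sum_ite_mem, Finset.univ_inter, Finset.sum_const, nsmul_eq_mul, mul_one]
    rw [h1, h2]

end proj

lemma mulVec_uvec {n : ℕ} {i j : Fin n} (hij : i ≠ j) (a b : ℝ)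
    (A : Matrix (Fin n) (Fin n) ℝ) (k : Fin n) :
    (A *ᵥ uvec i j a b) k = a * A k i + b * A k j := by
  show (fun l => A k l) ⬝ᵥ uvec i j a b = _
  rw [dotProduct_comm, uvec_dot hij]

theorem stmt18 {n p N : ℕ} (hp : 1 ≤ p) (hpn : p < n) (hN : 0 < N)
    (P : Fin N → Matrix (Fin n) (Fin n) ℝ)
    (hproj : ∀ k, (P k)ᵀ = P k ∧ P k * P k = P k ∧ (P k).rank = p)
    (Ce : Matrix (Fin n) (Fin n) ℝ) (hCe : Ce = (1 / (N : ℝ)) • ∑ k, P k)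
    (hbal : ∀ P₁ P₂ : Matrix (Fin n) (Fin n) ℝ,
      (P₁ᵀ = P₁ ∧ P₁ * P₁ = P₁ ∧ P₁.rank = p) →
      (P₂ᵀ = P₂ ∧ P₂ * P₂ = P₂ ∧ P₂.rank = p) →
      (P₁ * Ce).trace = (P₂ * Ce).trace) :
    Ce = ((p : ℝ) / (n : ℝ)) • (1 : Matrix (Fin n) (Fin n) ℝ) := by
  classical
  have hn0 : (n : ℝ) ≠ 0 := Nat.cast_ne_zero.mpr (by omega)
  -- symmetry of Ce
  have hsym : ∀ i j, Ce j i = Ce i j := by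
    intro i j
    rw [hCe]
    simp only [Matrix.smul_apply, Finset.sum_apply, Matrix.sum_apply]
    congr 1
    refine Finset.sum_congr rfl fun k _ => ?_
    have := congrFun (congrFun (hproj k).1 i) j
    simpa [Matrix.transpose_apply] using this
  -- trace of Ce is p
  have htrP : ∀ k, (P k).trace = (p : ℝ) := by
    intro k
    rw [idem_trace_eq_rank _ (hproj k).2.1, (hproj k).2.2]
  have htrCe : Ce.trace = (p : ℝ) := by
    rw [hCe, Matrix.trace_smul, Matrix.trace_sum]
    simp only [htrP, Finset.sum_const, Finset.card_univ, Fintype.card_fin,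
      nsmul_eq_mul, smul_eq_mul]
    field_simp
  -- key construction for i ≠ j
  have key : ∀ (i j : Fin n), i ≠ j → ∀ a b a' b' : ℝ,
      a ^ 2 + b ^ 2 = 1 → a' ^ 2 + b' ^ 2 = 1 →
      a * (a * Ce i i + b * Ce i j) + b * (a * Ce j i + b * Ce j j)
        = a' * (a' * Ce i i + b' * Ce i j) + b' * (a' * Ce j i + b' * Ce j j) := by
    intro i j hij a b a' b' hab hab'
    -- choose a set of p-1 coordinates avoiding i and j
    have hcard : p - 1 ≤ (Finset.univ \ ({i, j} : Finset (Fin n))).card := by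
      rw [Finset.card_sdiff_of_subset (Finset.subset_univ _), Finset.card_univ, Fintype.card_fin,
        Finset.card_pair hij]
      omega
    obtain ⟨S, hSsub, hScard⟩ := Finset.exists_subset_card_eq hcard
    have hiS : i ∉ S := fun h => by
      have := hSsub h; simp at this
    have hjS : j ∉ S := fun h => by
      have := hSsub h; simp at this
    have hSc : (S.card : ℝ) = (p : ℝ) - 1 := by
      rw [hScard]; push_cast [Nat.cast_sub hp]; ring
    -- the constructed matrices are rank-p projectors
    have mk : ∀ c d : ℝ, c ^ 2 + d ^ 2 = 1 →
        (pimat i j c d S)ᵀ = pimat i j c d S ∧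
        pimat i j c d S * pimat i j c d S = pimat i j c d S ∧
        (pimat i j c d S).rank = p := by
      intro c d hcd
      obtain ⟨h1, h2, h3⟩ := pimat_proj hij hcd hiS hjS
      refine ⟨h1, h2, ?_⟩
      have h4 := idem_trace_eq_rank _ h2
      rw [h3, hSc] at h4
      have : ((pimat i j c d S).rank : ℝ) = (p : ℝ) := by linarith
      exact_mod_cast this
    -- trace formula
    have tf : ∀ c d : ℝ, (pimat i j c d S * Ce).trace
        = (c * (c * Ce i i + d * Ce i j) + d * (c * Ce j i + d * Ce j j))
          + (dmat S * Ce).trace := by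
      intro c d
      rw [pimat, add_mul, Matrix.trace_add, trace_vmv, uvec_dot hij,
        mulVec_uvec hij, mulVec_uvec hij]
    have := hbal _ _ (mk a b hab) (mk a' b' hab')
    rw [tf, tf] at this
    linarith
  -- diagonal entries are all equal
  have hdiag : ∀ i j : Fin n, Ce i i = Ce j j := by
    intro i j
    by_cases hij : i = j
    · rw [hij]
    · have := key i j hij 1 0 0 1 (by norm_num) (by norm_num)
      linarith
  -- off-diagonal entries vanish
  have hoff : ∀ i j : Fin n, i ≠ j → Ce i j = 0 := by
    intro i j hij
    set s : ℝ := Real.sqrt 2⁻¹ with hs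
    have hs2 : s ^ 2 = 2⁻¹ := Real.sq_sqrt (by norm_num)
    have h1 : s ^ 2 + s ^ 2 = 1 := by rw [hs2]; norm_num
    have h2 : s ^ 2 + (-s) ^ 2 = 1 := by rw [neg_pow]; simp [hs2]; norm_num
    have := key i j hij s s s (-s) h1 h2
    have hji : Ce j i = Ce i j := hsym i j
    nlinarith [hs2]
  -- each diagonal entry is p/n
  have hdval : ∀ i : Fin n, Ce i i = (p : ℝ) / (n : ℝ) := by
    intro i
    have : Ce.trace = (n : ℝ) * Ce i i := by
      rw [Matrix.trace]
      have : ∀ k : Fin n, Ce.diag k = Ce i i := fun k => hdiag k i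
      rw [Finset.sum_congr rfl fun k _ => this k]
      simp [Finset.card_univ, mul_comm]
    rw [htrCe] at this
    rw [eq_div_iff hn0]
    linarith
  ext i j
  rw [Matrix.smul_apply, Matrix.one_apply]
  by_cases hij : i = j
  · rw [hij, if_pos rfl, smul_eq_mul, mul_one]
    exact hdval j
  · rw [if_neg hij, smul_eq_mul, mul_zero]
    exact hoff i j hij
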